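/- The term rewriting system R obtained by orienting left-to-right the equations x+e=x, e+x=x, (x+y)+z=x+(y+z), (x+y)·z=y·(x·z), (d·x)·y=x·(y+x), e·x=x, d·e=e is terminating: there is no infinite sequence of rewrites. -/

import Mathlib

/-- Ground terms over constants d, e with binary operations + (add) and · (app). -/
inductive Tm : Type
  | d : Tm
  | e : Tm
  | add : Tm → Tm → Tm
  | app : Tm → Tm → Tm
  deriving DecidableEq

open Tm

/-- Root rewrite steps: instances of the oriented rules. -/
inductive Root : Tm → Tm → Prop
  | addE (x) : Root (add x e) x
  | eAdd (x) : Root (add e x) x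
  | assoc (x y z) : Root (add (add x y) z) (add x (add y z))
  | appAdd (x y z) : Root (app (add x y) z) (app y (app x z))
  | appD (x y) : Root (app (app d x) y) (app x (add y x))
  | appE (x) : Root (app e x) x
  | dE : Root (app d e) e

/-- One rewrite step: a root step applied at some subterm position. -/
inductive Step : Tm → Tm → Prop
  | root {t u} : Root t u → Step t u
  | addL {t t' u} : Step t t' → Step (add t u) (add t' u)
  | addR {t u u'} : Step u u' → Step (add t u) (add t u')
  | appL {t t' u} : Step t t' → Step (app t u) (app t' u)
  | appR {t u u'} : Step u u' → Step (app t u) (app t u')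

/-- Zero or more rewrite steps. -/
def Steps : Tm → Tm → Prop := Relation.ReflTransGen Step

/-- A normal form is a term to which no rule applies. -/
def NormalForm (t : Tm) : Prop := ∀ u, ¬ Step t u

/-- Provable equality in the equational theory (reflexive symmetric transitive
congruence closure of the rule instances). -/
def TermEq : Tm → Tm → Prop := Relation.EqvGen Step

def mu : Tm → ℕ
  | Tm.d => 1
  | Tm.e => 0
  | Tm.add x y => 2 * mu x + mu y + 2
  | Tm.app x y => 2 ^ mu x * (mu y + 1)

lemma root_mu {t u : Tm} (h : Root t u) : mu u < mu t := by
  cases h with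
  | addE x => simp only [mu]; omega
  | eAdd x => simp only [mu]; omega
  | assoc x y z => simp only [mu]; omega
  | appAdd x y z =>
      simp only [mu]
      set a := mu x; set b := mu y; set c := mu z
      have hA : 1 ≤ 2 ^ a := Nat.one_le_two_pow
      have hB : 1 ≤ 2 ^ b := Nat.one_le_two_pow
      have e1 : 2 ^ (2 * a + b + 2) = 2 ^ a * 2 ^ a * 2 ^ b * 4 := by
        rw [show 2 * a + b + 2 = a + a + b + 2 by ring, pow_add, pow_add, pow_add]; ring
      rw [e1]
      have h1 : 2 ^ a * (2 ^ a * 2 ^ b * (c + 1)) ≥ 1 * (2 ^ a * 2 ^ b * (c + 1)) :=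
        Nat.mul_le_mul_right _ hA
      have h2 : 2 ^ a * 2 ^ a * 2 ^ b * (c + 1) ≥ 2 ^ b := by
        calc 2 ^ a * 2 ^ a * 2 ^ b * (c + 1) ≥ 1 * 1 * 2 ^ b * 1 := by
              apply Nat.mul_le_mul (Nat.mul_le_mul (Nat.mul_le_mul hA hA) le_rfl) (by omega)
          _ = 2 ^ b := by ring
      nlinarith [h1, h2]
  | appD x y =>
      simp only [mu]
      set a := mu x; set b := mu y
      have hA : a < 2 ^ a := Nat.lt_two_pow_self (n := a)
      have hA1 : 1 ≤ 2 ^ a := Nat.one_le_two_pow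
      have e1 : 2 ^ (2 ^ 1 * (a + 1)) = 2 ^ a * 2 ^ a * 4 := by
        rw [show 2 ^ 1 * (a + 1) = a + a + 2 by ring, pow_add, pow_add]; ring
      rw [e1]
      have h1 : 2 ^ a * a < 2 ^ a * 2 ^ a := Nat.mul_lt_mul_of_le_of_lt le_rfl hA (by omega)
      have h2 : 2 ^ a * b ≤ 2 ^ a * 2 ^ a * b :=
        Nat.mul_le_mul_right _ (Nat.le_mul_of_pos_right _ (by omega))
      have h3 : 2 ^ a ≤ 2 ^ a * 2 ^ a := Nat.le_mul_of_pos_right _ (by omega)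
      nlinarith [h1, h2, h3]
  | appE x => simp only [mu]; omega
  | dE => simp [mu]

lemma step_mu {t u : Tm} (h : Step t u) : mu u < mu t := by
  induction h with
  | root h => exact root_mu h
  | addL _ ih => simp only [mu]; omega
  | addR _ ih => simp only [mu]; omega
  | appL _ ih =>
      simp only [mu]
      exact Nat.mul_lt_mul_of_lt_of_le (Nat.pow_lt_pow_right (by norm_num) ih) le_rfl (by omega)
  | appR _ ih =>
      simp only [mu]
      exact Nat.mul_lt_mul_of_le_of_lt le_rfl (by omega) (Nat.pos_of_ne_zero (by positivity))

/-- the rewrite system R is terminating: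
there is no infinite sequence of rewrites. -/
theorem R_terminating :
    ¬ ∃ f : ℕ → Tm, ∀ n : ℕ, Step (f n) (f (n + 1)) := by
  rintro ⟨f, hf⟩
  have key : ∀ n, mu (f n) + n ≤ mu (f 0) := by
    intro n
    induction n with
    | zero => omega
    | succ k ih => have := step_mu (hf k); omega
  have := key (mu (f 0) + 1)
  omega
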